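/- arXiv:2604.10142 — 4 statements merged into one kernel-verified Lean document; each statement's English description precedes it below -/
import Mathlib

section
/- Let u be a positive continuous function on the closed ball B_5(0) in R^d with u(0)=1. Suppose there exist constants A ≥ 1 and γ > 0 such that for all 0 < r < R and all x with |x| < 2, osc(u, B_r(x)) ≤ A (r/R)^γ osc(u, B_R(x)). Suppose further there exist C > 0 and λ > 0 such that for all r ≤ 1 and all x with |x| < 2 − r, inf_{B_r(x)} u ≤ C r^{−λ}. Then sup_{B_1(0)} u ≤ 4C exp(λ((1/γ) log(4A) + 2 log(2λ))). -/
open Metric Real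

private lemma stmt0_aux_pow (t : ℝ) (ht0 : 0 < t) : 1 + t^2/4 ≤ (2:ℝ) ^ t := by
  have hl2 : (0.6931471803 : ℝ) < Real.log 2 := Real.log_two_gt_d9
  have e3 : 1 + t * Real.log 2 / 3 ≤ Real.exp (t * Real.log 2 / 3) := by
    have := Real.add_one_le_exp (t * Real.log 2 / 3); linarith
  have epos : (0:ℝ) ≤ 1 + t * Real.log 2 / 3 := by nlinarith
  have cube : (1 + t * Real.log 2 / 3)^3 ≤ Real.exp (t * Real.log 2 / 3) ^ 3 :=
    pow_le_pow_left₀ epos e3 3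
  have hcube2 : Real.exp (t * Real.log 2 / 3) ^ 3 = Real.exp (t * Real.log 2) := by
    rw [← Real.exp_nat_mul]
    congr 1
    push_cast
    ring
  have hP : (2:ℝ) ^ t = Real.exp (t * Real.log 2) := by
    rw [Real.rpow_def_of_pos two_pos, mul_comm]
  rw [hP, ← hcube2]
  refine le_trans ?_ cube
  have haux : (1/4 - (Real.log 2)^2/3)^2 ≤ 4*(Real.log 2)^4/27 := by
    nlinarith [sq_nonneg (Real.log 2), sq_nonneg ((Real.log 2)^2)]
  have hquad : ((Real.log 2)^3/27)*t^2 + ((Real.log 2)^2/3 - 1/4)*t + Real.log 2 ≥ 0 := by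
    nlinarith [sq_nonneg (2*((Real.log 2)^3/27)*t + ((Real.log 2)^2/3 - 1/4)), haux,
      ht0.le, pow_pos (lt_trans (by norm_num) hl2) 3]
  nlinarith [mul_nonneg ht0.le hquad]

private lemma stmt0_aux_key (lam : ℝ) (hlam : 0 < lam) :
    (2:ℝ) ^ (-(1/lam)) / (4 * lam^2) ≤ 1 - (2:ℝ) ^ (-(1/lam)) := by
  set t : ℝ := 1/lam with htdef
  have ht0 : 0 < t := by positivity
  have hPbig := stmt0_aux_pow t ht0
  have hqP : (2:ℝ)^(-t) * (2:ℝ)^t = 1 := by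
    rw [Real.rpow_neg (by norm_num : (0:ℝ) ≤ 2)]
    exact inv_mul_cancel₀ (Real.rpow_pos_of_pos two_pos t).ne'
  have hq0 : (0:ℝ) < (2:ℝ)^(-t) := Real.rpow_pos_of_pos two_pos _
  have ht2 : t^2 = 1/lam^2 := by rw [htdef]; field_simp
  have hmul := mul_le_mul_of_nonneg_left hPbig hq0.le
  rw [hqP] at hmul
  have h4 : (2:ℝ)^(-t) * (t^2/4) = (2:ℝ)^(-t) / (4*lam^2) := by rw [ht2]; ring
  linarith [hmul, h4]

/-- Hölder-to-Harnack lemma: oscillation decay plus mild growth of infima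
implies a quantitative Harnack-type bound. -/
theorem stmt_0 (d : ℕ) (u : EuclideanSpace ℝ (Fin d) → ℝ)
    (hu_cont : ContinuousOn u (closedBall 0 5))
    (hu_pos : ∀ x ∈ closedBall (0 : EuclideanSpace ℝ (Fin d)) 5, 0 < u x)
    (hu0 : u 0 = 1)
    (A γ : ℝ) (hA : 1 ≤ A) (hγ : 0 < γ)
    (hosc : ∀ r R : ℝ, ∀ x : EuclideanSpace ℝ (Fin d), 0 < r → r < R → ‖x‖ < 2 →
      sSup (u '' ball x r) - sInf (u '' ball x r)
        ≤ A * (r / R) ^ γ * (sSup (u '' ball x R) - sInf (u '' ball x R)))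
    (C lam : ℝ) (hC : 0 < C) (hlam : 0 < lam)
    (hinf : ∀ r : ℝ, ∀ x : EuclideanSpace ℝ (Fin d), 0 < r → r ≤ 1 → ‖x‖ < 2 - r →
      sInf (u '' ball x r) ≤ C * r ^ (-lam)) :
    ∀ y ∈ ball (0 : EuclideanSpace ℝ (Fin d)) 1,
      u y ≤ 4 * C * Real.exp (lam * ((1 / γ) * Real.log (4 * A) + 2 * Real.log (2 * lam))) := by
  intro y hy
  by_contra hcon0
  push_neg at hcon0
  obtain ⟨L, hL⟩ : ∃ L : ℝ, L = (1 / γ) * Real.log (4 * A) + 2 * Real.log (2 * lam) := ⟨_, rfl⟩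
  obtain ⟨Bv, hBv⟩ : ∃ Bv : ℝ, Bv = 4 * C * Real.exp (lam * L) := ⟨_, rfl⟩
  have hcon : Bv < u y := by rw [hBv, hL]; exact hcon0
  have hlam' : lam ≠ 0 := ne_of_gt hlam
  have hγ' : γ ≠ 0 := ne_of_gt hγ
  have hA4 : (0:ℝ) < 4 * A := by linarith
  have hBpos : 0 < Bv := by rw [hBv]; positivity
  obtain ⟨q, hqdef⟩ : ∃ q : ℝ, q = (2:ℝ) ^ (-(1/lam)) := ⟨_, rfl⟩
  have hq0 : 0 < q := by rw [hqdef]; exact Real.rpow_pos_of_pos two_pos _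
  have hq1 : q < 1 := by
    rw [hqdef]
    refine Real.rpow_lt_one_of_one_lt_of_neg one_lt_two ?_
    have : 0 < 1/lam := by positivity
    linarith
  have h1q : 0 < 1 - q := by linarith
  obtain ⟨K, hKdef⟩ : ∃ K : ℝ, K = (4 * A) ^ (1/γ) := ⟨_, rfl⟩
  have hK1 : 1 < K := by
    rw [hKdef]
    exact (Real.one_lt_rpow_iff_of_pos hA4).mpr (Or.inl ⟨by linarith, by positivity⟩)
  obtain ⟨r, hrdef⟩ : ∃ r : ℕ → ℝ, ∀ k, r k = (2 * C / (Bv * 2^k)) ^ (1/lam) :=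
    ⟨_, fun _ => rfl⟩
  have hxpos : ∀ k : ℕ, (0:ℝ) < 2 * C / (Bv * 2^k) := by
    intro k; positivity
  have hrpos : ∀ k, 0 < r k := by
    intro k; rw [hrdef k]; exact Real.rpow_pos_of_pos (hxpos k) _
  have hrstep : ∀ k, r (k+1) = r k * q := by
    intro k
    have h1 : 2 * C / (Bv * 2^(k+1)) = (2 * C / (Bv * 2^k)) * (2:ℝ)⁻¹ := by
      rw [pow_succ]; field_simp
    rw [hrdef (k+1), hrdef k, h1, Real.mul_rpow (hxpos k).le (by norm_num),
      Real.inv_rpow (by norm_num), hqdef, Real.rpow_neg (by norm_num)]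
  have hCr : ∀ k, C * (r k) ^ (-lam) = Bv * 2^k / 2 := by
    intro k
    rw [hrdef k, ← Real.rpow_mul (hxpos k).le]
    have h1 : (1/lam) * (-lam) = -1 := by field_simp
    rw [h1, Real.rpow_neg_one, inv_div]
    field_simp
  obtain ⟨s, hsdef⟩ : ∃ s : ℕ → ℝ, ∀ k, s k = K * r k / (1 - q) := ⟨_, fun _ => rfl⟩
  have hKrpos : ∀ k, 0 < K * r k := by
    intro k
    have := hrpos k
    nlinarith
  have hspos : ∀ k, 0 < s k := by
    intro k
    rw [hsdef k]
    exact div_pos (hKrpos k) h1q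
  have hsstep : ∀ k, s k - K * r k = s (k+1) := by
    intro k
    rw [hsdef k, hsdef (k+1), hrstep k]
    field_simp
    ring
  -- the key identity K * r 0 = q / (4 * lam^2)
  have h2l : (0:ℝ) < 2 * lam := by linarith
  have hexp2 : Real.exp (2 * Real.log (2*lam)) = 4 * lam^2 := by
    rw [two_mul, Real.exp_add, Real.exp_log h2l]; ring
  have hKr0 : K * r 0 = q / (4 * lam^2) := by
    have hx0 : 2 * C / (Bv * 2^(0:ℕ)) = (2 * Real.exp (lam * L))⁻¹ := by
      rw [hBv]
      have he : Real.exp (lam * L) ≠ 0 := (Real.exp_pos _).ne'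
      field_simp
      ring
    have hr0 : r 0 = Real.exp ((-(Real.log 2) - lam * L) * (1/lam)) := by
      rw [hrdef 0, hx0, Real.rpow_def_of_pos (by positivity)]
      congr 1
      rw [Real.log_inv, Real.log_mul (by norm_num) (Real.exp_pos _).ne', Real.log_exp]
      ring
    have hKe : K = Real.exp (Real.log (4*A) * (1/γ)) := by
      rw [hKdef, Real.rpow_def_of_pos hA4]
    have hqe : q = Real.exp (Real.log 2 * (-(1/lam))) := by
      rw [hqdef, Real.rpow_def_of_pos two_pos]
    rw [hKe, hr0, ← Real.exp_add]
    have hid : Real.log (4*A) * (1/γ) + (-(Real.log 2) - lam * L) * (1/lam)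
        = Real.log 2 * (-(1/lam)) + -(2 * Real.log (2*lam)) := by
      rw [hL]; field_simp; ring
    rw [hid, Real.exp_add, Real.exp_neg, hexp2, ← hqe]
    rw [div_eq_mul_inv]
  -- key numeric inequality : q / (4 lam²) ≤ 1 - q
  have hkey : q / (4 * lam^2) ≤ 1 - q := by
    rw [hqdef]
    exact stmt0_aux_key lam hlam
  have hs0 : s 0 ≤ 1 := by
    rw [hsdef 0, div_le_one h1q, hKr0]
    exact hkey
  have hsle1 : ∀ k, s k ≤ 1 := by
    intro k
    induction k with
    | zero => exact hs0
    | succ k ih =>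
      have h1 := hsstep k
      have h2 := hKrpos k
      linarith
  -- global bound on u over the closed ball
  obtain ⟨S, hS⟩ := (isCompact_closedBall (0 : EuclideanSpace ℝ (Fin d)) 5).exists_bound_of_continuousOn hu_cont
  have hSb : ∀ w ∈ closedBall (0 : EuclideanSpace ℝ (Fin d)) 5, u w ≤ S := by
    intro w hw
    have := hS w hw
    rw [Real.norm_eq_abs] at this
    exact (le_abs_self _).trans this
  have hwn : ∀ (z w : EuclideanSpace ℝ (Fin d)) (ρ : ℝ), w ∈ ball z ρ → ‖w‖ < ‖z‖ + ρ := by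
    intro z w ρ hw
    have h1 : dist w z < ρ := mem_ball.mp hw
    calc ‖w‖ = dist w 0 := (dist_zero_right w).symm
      _ ≤ dist w z + dist z 0 := dist_triangle _ _ _
      _ < ‖z‖ + ρ := by rw [dist_zero_right]; linarith
  have hbdd : ∀ (z : EuclideanSpace ℝ (Fin d)) (ρ : ℝ), ‖z‖ + ρ ≤ 5 →
      BddAbove (u '' ball z ρ) := by
    intro z ρ h
    refine ⟨S, ?_⟩
    rintro _ ⟨w, hw, rfl⟩
    exact hSb w (mem_closedBall_zero_iff.mpr (le_of_lt (lt_of_lt_of_le (hwn z w ρ hw) h)))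
  have himg : ∀ (z : EuclideanSpace ℝ (Fin d)) (ρ : ℝ), 0 < ρ → (u '' ball z ρ).Nonempty := by
    intro z ρ hρ
    exact ⟨u z, Set.mem_image_of_mem u (mem_ball_self hρ)⟩
  have hinf0 : ∀ (z : EuclideanSpace ℝ (Fin d)) (ρ : ℝ), 0 < ρ → ‖z‖ + ρ ≤ 5 →
      0 ≤ sInf (u '' ball z ρ) := by
    intro z ρ hρ h5
    refine le_csInf (himg z ρ hρ) ?_
    rintro _ ⟨w, hw, rfl⟩
    exact (hu_pos w (mem_closedBall_zero_iff.mpr (le_of_lt (lt_of_lt_of_le (hwn z w ρ hw) h5)))).le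
  -- main induction
  have main : ∀ k : ℕ, ∃ z : EuclideanSpace ℝ (Fin d), ‖z‖ ≤ 2 - s k ∧ Bv * 2^k < u z := by
    intro k
    induction k with
    | zero =>
      refine ⟨y, ?_, by simpa using hcon⟩
      have hy1 : ‖y‖ < 1 := mem_ball_zero_iff.mp hy
      linarith [hs0]
    | succ k ih =>
      obtain ⟨z, hz1, hz2⟩ := ih
      have hrk := hrpos k
      have hRpos := hKrpos k
      have hKr_le_s : K * r k ≤ s k := by
        rw [hsdef k, le_div_iff₀ h1q]
        nlinarith [mul_nonneg hRpos.le hq0.le]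
      have hrKr : r k < K * r k := by nlinarith
      have hrr_lt_s : r k < s k := by linarith
      have hsk1 : s k ≤ 1 := hsle1 k
      have hskpos := hspos k
      have hz_norm2 : ‖z‖ < 2 := by linarith
      have hzr : ‖z‖ < 2 - r k := by linarith
      have hrle1 : r k ≤ 1 := by linarith
      have hball5 : ‖z‖ + r k ≤ 5 := by linarith
      have hball5' : ‖z‖ + K * r k ≤ 5 := by linarith
      -- inf bound on the small ball
      have hinf_r : sInf (u '' ball z (r k)) ≤ Bv * 2^k / 2 := by
        have h := hinf (r k) z hrk hrle1 hzr
        rw [hCr k] at h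
        exact h
      have hsup_r : u z ≤ sSup (u '' ball z (r k)) :=
        le_csSup (hbdd z (r k) hball5) (Set.mem_image_of_mem u (mem_ball_self hrk))
      -- oscillation estimate
      have hratio : A * (r k / (K * r k)) ^ γ = 1/4 := by
        have h1 : r k / (K * r k) = K⁻¹ := by
          rw [eq_comm, inv_eq_iff_eq_inv, inv_div]
          field_simp
        have hKnn : (0:ℝ) ≤ K := by linarith
        rw [h1, Real.inv_rpow hKnn, hKdef, ← Real.rpow_mul hA4.le]
        have h2 : (1/γ) * γ = 1 := by field_simp
        rw [h2, Real.rpow_one]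
        field_simp
      have hosc1 := hosc (r k) (K * r k) z hrk hrKr hz_norm2
      rw [hratio] at hosc1
      have hinfR := hinf0 z (K * r k) hRpos hball5'
      have hsupR : Bv * 2^k * 2 < sSup (u '' ball z (K * r k)) := by
        linarith only [hosc1, hinf_r, hsup_r, hinfR, hz2]
      obtain ⟨v, hvmem, hv2⟩ := exists_lt_of_lt_csSup (himg z (K * r k) hRpos) hsupR
      obtain ⟨w, hw, rfl⟩ := hvmem
      have hwnorm : ‖w‖ < ‖z‖ + K * r k := hwn z w (K * r k) hw
      refine ⟨w, ?_, ?_⟩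
      · have := hsstep k
        linarith
      · rw [pow_succ]
        linarith
  -- conclude
  obtain ⟨k, hk⟩ := pow_unbounded_of_one_lt (S / Bv) (one_lt_two : (1:ℝ) < 2)
  obtain ⟨z, hz1, hz2⟩ := main k
  have hz5 : z ∈ closedBall (0 : EuclideanSpace ℝ (Fin d)) 5 := by
    rw [mem_closedBall_zero_iff]
    have := hspos k
    linarith
  have h1 : u z ≤ S := hSb z hz5
  have h2 : S < Bv * 2^k := by
    rw [div_lt_iff₀ hBpos] at hk
    linarith [hk]
  linarith
end

section
/- Let β = 1/10, let Z ∈ R^d be nonzero, and let D be a bounded random vector in R^d with E[D] = 0, |D| ≤ K almost surely for some K < |Z|/2, and E[(D · Ẑ)²] ≥ (3/4) E[|D|²], where Ẑ = Z/|Z|. Then E[|Z + D|^{2β}] ≤ |Z|^{2β} − (β/4)|Z|^{2β−2} E[|D|²] + c(β) |Z|^{2β−3} E[|D|³] for a constant c(β) depending only on β. -/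
open Set

private lemma hd_rpow (p : ℝ) {x : ℝ} (hx : 0 < x) :
    HasDerivAt (fun y : ℝ => y ^ p) (p * x ^ (p - 1)) x :=
  Real.hasDerivAt_rpow_const (Or.inl hx.ne')

private lemma aux1 (x : ℝ) (hx : 1 ≤ x) (hx2 : x ≤ 9/4) :
    x ^ (1/10 : ℝ) ≤ 1 + (1/10)*(x-1) - (1/24)*(x-1)^2 + (x-1)^3 := by
  set F : ℝ → ℝ := fun y => 1 + (1/10)*(y-1) - (1/24)*(y-1)^2 + (y-1)^3 - y ^ (1/10 : ℝ) with hF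
  set F1 : ℝ → ℝ := fun y => 1/10 - (1/12)*(y-1) + 3*(y-1)^2 - (1/10) * y ^ (-(9/10) : ℝ) with hF1
  have hdF : ∀ y ∈ Icc (1:ℝ) (9/4), HasDerivAt F (F1 y) y := by
    intro y hy
    have hy0 : (0:ℝ) < y := lt_of_lt_of_le one_pos hy.1
    have h1 := hd_rpow (1/10) hy0
    have hder := (((((hasDerivAt_const y (1:ℝ)).add
        (((hasDerivAt_id y).sub_const 1).const_mul (1/10))).sub
        ((((hasDerivAt_id y).sub_const 1).pow 2).const_mul (1/24))).add
        (((hasDerivAt_id y).sub_const 1).pow 3)).sub h1)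
    convert hder using 1
    any_goals rfl
    rw [show ((1/10 : ℝ) - 1) = (-(9/10) : ℝ) by norm_num] at *
    simp only [hF1, id_eq]
    ring
  have hdF1 : ∀ y ∈ Icc (1:ℝ) (9/4),
      HasDerivAt F1 (-(1/12) + 6*(y-1) + (9/100) * y ^ (-(19/10) : ℝ)) y := by
    intro y hy
    have hy0 : (0:ℝ) < y := lt_of_lt_of_le one_pos hy.1
    have h1 := hd_rpow (-(9/10)) hy0
    have hder := ((((hasDerivAt_const y ((1:ℝ)/10)).sub
        (((hasDerivAt_id y).sub_const 1).const_mul (1/12))).add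
        ((((hasDerivAt_id y).sub_const 1).pow 2).const_mul 3)).sub (h1.const_mul (1/10)))
    convert hder using 1
    any_goals rfl
    rw [show ((-(9/10) : ℝ) - 1) = (-(19/10) : ℝ) by norm_num] at *
    simp only [id_eq]
    ring
  have hF1nonneg : ∀ y ∈ Icc (1:ℝ) (9/4), 0 ≤ F1 y := by
    have hmono : MonotoneOn F1 (Icc (1:ℝ) (9/4)) := by
      apply monotoneOn_of_hasDerivWithinAt_nonneg (convex_Icc _ _)
        (fun y hy => ((hdF1 y hy).continuousAt.continuousWithinAt))
        (fun y hy => ((hdF1 y (interior_subset hy)).hasDerivWithinAt))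
      intro y hy
      rw [interior_Icc] at hy
      have hy1 : (1:ℝ) < y := hy.1
      have hy0 : (0:ℝ) < y := lt_trans one_pos hy1
      have h1 : y ^ ((-2:ℝ)) ≤ y ^ (-(19/10) : ℝ) :=
        Real.rpow_le_rpow_of_exponent_le hy1.le (by norm_num)
      have h2 : (1 : ℝ) - 2*(y-1) ≤ y ^ ((-2:ℝ)) := by
        rw [show ((-2:ℝ)) = ((-2 : ℤ) : ℝ) by norm_num, Real.rpow_intCast]
        rw [zpow_neg, show ((2:ℤ)) = ((2:ℕ):ℤ) by norm_num, zpow_natCast]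
        have hy2 : (0:ℝ) < y ^ 2 := by positivity
        have hinv : (y ^ 2)⁻¹ * y ^ 2 = 1 := inv_mul_cancel₀ hy2.ne'
        have hkey : (1 - 2*(y-1)) * y ^ 2 ≤ 1 := by nlinarith [mul_nonneg (sq_nonneg (y-1)) (by linarith : (0:ℝ) ≤ 2*y+1)]
        nlinarith [hinv, hkey, hy2]
      nlinarith [h1, h2]
    intro y hy
    have h := hmono (left_mem_Icc.mpr (by norm_num)) hy hy.1
    have hF1one : F1 1 = 0 := by
      simp only [hF1]
      rw [show ((1:ℝ) ^ (-(9/10):ℝ)) = 1 from Real.one_rpow _]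
      ring
    linarith
  have hmonoF : MonotoneOn F (Icc (1:ℝ) (9/4)) := by
    apply monotoneOn_of_hasDerivWithinAt_nonneg (convex_Icc _ _)
      (fun y hy => ((hdF y hy).continuousAt.continuousWithinAt))
      (fun y hy => ((hdF y (interior_subset hy)).hasDerivWithinAt))
    intro y hy
    exact hF1nonneg y (interior_subset hy)
  have hFone : F 1 = 0 := by
    simp only [hF]
    rw [Real.one_rpow]; ring
  have h := hmonoF (left_mem_Icc.mpr (by norm_num)) ⟨hx, hx2⟩ hx
  rw [hFone] at h
  simp only [hF] at h
  linarith

private lemma aux2 (x : ℝ) (hx : 1/4 ≤ x) (hx2 : x ≤ 1) :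
    x ^ (1/10 : ℝ) ≤ 1 + (1/10)*(x-1) - (1/24)*(x-1)^2 := by
  set G : ℝ → ℝ := fun y => 1 + (1/10)*(y-1) - (1/24)*(y-1)^2 - y ^ (1/10 : ℝ) with hG
  set G1 : ℝ → ℝ := fun y => 1/10 - (1/12)*(y-1) - (1/10) * y ^ (-(9/10) : ℝ) with hG1
  have hdG : ∀ y ∈ Icc (1/4:ℝ) 1, HasDerivAt G (G1 y) y := by
    intro y hy
    have hy0 : (0:ℝ) < y := lt_of_lt_of_le (by norm_num) hy.1
    have h1 := hd_rpow (1/10) hy0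
    have hder := ((((hasDerivAt_const y (1:ℝ)).add
        (((hasDerivAt_id y).sub_const 1).const_mul (1/10))).sub
        ((((hasDerivAt_id y).sub_const 1).pow 2).const_mul (1/24))).sub h1)
    convert hder using 1
    any_goals rfl
    rw [show ((1/10 : ℝ) - 1) = (-(9/10) : ℝ) by norm_num] at *
    simp only [hG1, id_eq]
    ring
  have hdG1 : ∀ y ∈ Icc (1/4:ℝ) 1,
      HasDerivAt G1 (-(1/12) + (9/100) * y ^ (-(19/10) : ℝ)) y := by
    intro y hy
    have hy0 : (0:ℝ) < y := lt_of_lt_of_le (by norm_num) hy.1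
    have h1 := hd_rpow (-(9/10)) hy0
    have hder := (((hasDerivAt_const y ((1:ℝ)/10)).sub
        (((hasDerivAt_id y).sub_const 1).const_mul (1/12))).sub (h1.const_mul (1/10)))
    convert hder using 1
    any_goals rfl
    rw [show ((-(9/10) : ℝ) - 1) = (-(19/10) : ℝ) by norm_num] at *
    ring
  have hG1nonpos : ∀ y ∈ Icc (1/4:ℝ) 1, G1 y ≤ 0 := by
    have hmono : MonotoneOn G1 (Icc (1/4:ℝ) 1) := by
      apply monotoneOn_of_hasDerivWithinAt_nonneg (convex_Icc _ _)
        (fun y hy => ((hdG1 y hy).continuousAt.continuousWithinAt))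
        (fun y hy => ((hdG1 y (interior_subset hy)).hasDerivWithinAt))
      intro y hy
      rw [interior_Icc] at hy
      have hy0 : (0:ℝ) < y := lt_of_lt_of_le (by norm_num) hy.1.le
      have h1 : (1:ℝ) ≤ y ^ (-(19/10) : ℝ) :=
        Real.one_le_rpow_of_pos_of_le_one_of_nonpos hy0 hy.2.le (by norm_num)
      nlinarith [h1]
    intro y hy
    have h := hmono hy (right_mem_Icc.mpr (by norm_num)) hy.2
    have hG1one : G1 1 = 0 := by
      simp only [hG1]
      rw [show ((1:ℝ) ^ (-(9/10):ℝ)) = 1 from Real.one_rpow _]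
      ring
    linarith
  have hantiG : AntitoneOn G (Icc (1/4:ℝ) 1) := by
    apply antitoneOn_of_hasDerivWithinAt_nonpos (convex_Icc _ _)
      (fun y hy => ((hdG y hy).continuousAt.continuousWithinAt))
      (fun y hy => ((hdG y (interior_subset hy)).hasDerivWithinAt))
    intro y hy
    exact hG1nonpos y (interior_subset hy)
  have hGone : G 1 = 0 := by
    simp only [hG]
    rw [Real.one_rpow]; ring
  have h := hantiG ⟨hx, hx2⟩ (right_mem_Icc.mpr (by norm_num)) hx2
  rw [hGone] at h
  simp only [hG] at h
  linarith

lemma rpow_taylor_tenth (x : ℝ) (h1 : 1/4 ≤ x) (h2 : x ≤ 9/4) :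
    x ^ (1/10 : ℝ) ≤ 1 + (1/10)*(x-1) - (1/24)*(x-1)^2 + |x-1|^3 := by
  rcases le_total 1 x with hx | hx
  · rw [abs_of_nonneg (by linarith : (0:ℝ) ≤ x - 1)]
    exact aux1 x hx h2
  · have := aux2 x h1 hx
    have habs : (0:ℝ) ≤ |x-1|^3 := by positivity
    linarith

private lemma quad_est (p q : ℝ) (hq0 : 0 ≤ q) (hq2 : q ≤ 1/2) (hpl : -q ≤ p) (hpu : p ≤ q) :
    1 + (1/10)*(2*p+q^2) - (1/24)*(2*p+q^2)^2 + |2*p+q^2|^3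
      ≤ 1 + (1/5)*p + (1/10)*q^2 - (1/6)*p^2 + 16*q^3 := by
  have habs : |2*p+q^2| ≤ 5/2*q := by
    rw [abs_le]
    constructor <;> nlinarith
  have hcube : |2*p+q^2|^3 ≤ (5/2*q)^3 := pow_le_pow_left₀ (abs_nonneg _) habs 3
  have hpq3 : -q^3 ≤ p*q^2 := by nlinarith [sq_nonneg q]
  nlinarith [pow_nonneg hq0 4, pow_nonneg hq0 3, sq_nonneg (2*p+q^2)]

open MeasureTheory

set_option maxHeartbeats 1000000 in
/-- One-step supermartingale estimate in the aligned case: second-order Taylor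
expansion of `|Z + D|^{2β}` with `β = 1/10`. -/
theorem stmt_4 :
    ∃ c : ℝ, 0 < c ∧
      ∀ (β : ℝ), β = 1/10 →
      ∀ (d : ℕ) (Z : EuclideanSpace ℝ (Fin d)), Z ≠ 0 →
      ∀ (Ω : Type) (mΩ : MeasurableSpace Ω) (μ : Measure Ω), IsProbabilityMeasure μ →
      ∀ (D : Ω → EuclideanSpace ℝ (Fin d)), AEStronglyMeasurable D μ →
      ∀ (K : ℝ), K < ‖Z‖ / 2 →
      (∀ᵐ ω ∂μ, ‖D ω‖ ≤ K) →
      ((3/4) * ∫ ω, ‖D ω‖ ^ 2 ∂μ ≤ ∫ ω, (inner ℝ (D ω) ((1 / ‖Z‖) • Z) : ℝ) ^ 2 ∂μ) →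
      (∫ ω, D ω ∂μ) = 0 →
      (∫ ω, ‖Z + D ω‖ ^ (2 * β) ∂μ)
        ≤ ‖Z‖ ^ (2 * β) - (β / 4) * ‖Z‖ ^ (2 * β - 2) * ∫ ω, ‖D ω‖ ^ 2 ∂μ
            + c * ‖Z‖ ^ (2 * β - 3) * ∫ ω, ‖D ω‖ ^ 3 ∂μ := by
  refine ⟨16, by norm_num, ?_⟩
  intro β hβ d Z hZ Ω mΩ μ hμ D hD K hK hDK halign hmean
  subst hβ
  have hN : (0:ℝ) < ‖Z‖ := norm_pos_iff.mpr hZ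
  set N : ℝ := ‖Z‖ with hNdef
  set u : EuclideanSpace ℝ (Fin d) := (1 / N) • Z with hu_def
  set s : Ω → ℝ := fun ω => (inner ℝ (D ω) u : ℝ) with hs_def
  set θ : ℝ := 2 * (1/10) with hθ_def
  have hθpos : (0:ℝ) < N ^ θ := Real.rpow_pos_of_pos hN _
  have hu : ‖u‖ = 1 := by
    rw [hu_def, norm_smul, norm_div, norm_one, Real.norm_eq_abs, abs_of_pos hN, ← hNdef]
    field_simp
  -- K is nonnegative
  have hK0 : (0:ℝ) ≤ K := by
    obtain ⟨ω, hω⟩ := hDK.exists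
    exact le_trans (norm_nonneg _) hω
  -- measurability
  have hs_meas : AEStronglyMeasurable s μ :=
    (Continuous.inner continuous_id continuous_const).comp_aestronglyMeasurable hD
  have hr_meas : AEStronglyMeasurable (fun ω => ‖D ω‖) μ := hD.norm
  have hr2_meas : AEStronglyMeasurable (fun ω => ‖D ω‖^2) μ := by
    simpa [sq, Pi.mul_def] using hr_meas.mul hr_meas
  have hr3_meas : AEStronglyMeasurable (fun ω => ‖D ω‖^3) μ := by
    have := (hr_meas.mul hr_meas).mul hr_meas
    simpa [pow_succ, mul_assoc, Pi.mul_def] using this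
  have hs2_meas : AEStronglyMeasurable (fun ω => s ω^2) μ := by
    simpa [sq, Pi.mul_def] using hs_meas.mul hs_meas
  -- pointwise bounds
  have hsb : ∀ ω, |s ω| ≤ ‖D ω‖ := by
    intro ω
    calc |s ω| ≤ ‖D ω‖ * ‖u‖ := abs_real_inner_le_norm _ _
    _ = ‖D ω‖ := by rw [hu, mul_one]
  -- integrability
  have hDint : Integrable D μ :=
    (integrable_const K).mono' hD (by filter_upwards [hDK] with ω hω using hω)
  have hs_int : Integrable s μ :=
    (integrable_const K).mono' hs_meas (by
      filter_upwards [hDK] with ω hω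
      exact le_trans (hsb ω) hω)
  have hr2_int : Integrable (fun ω => ‖D ω‖^2) μ :=
    (integrable_const (K^2)).mono' hr2_meas (by
      filter_upwards [hDK] with ω hω
      rw [Real.norm_eq_abs, abs_of_nonneg (by positivity)]
      exact pow_le_pow_left₀ (norm_nonneg _) hω 2)
  have hr3_int : Integrable (fun ω => ‖D ω‖^3) μ :=
    (integrable_const (K^3)).mono' hr3_meas (by
      filter_upwards [hDK] with ω hω
      rw [Real.norm_eq_abs, abs_of_nonneg (by positivity)]
      exact pow_le_pow_left₀ (norm_nonneg _) hω 3)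
  have hs2_int : Integrable (fun ω => s ω^2) μ :=
    (integrable_const (K^2)).mono' hs2_meas (by
      filter_upwards [hDK] with ω hω
      rw [Real.norm_eq_abs, abs_of_nonneg (by positivity)]
      nlinarith [hsb ω, hω, abs_nonneg (s ω), sq_abs (s ω)])
  have hf0_int : Integrable (fun ω => ‖Z + D ω‖ ^ θ) μ := by
    have hcont : Continuous (fun v : EuclideanSpace ℝ (Fin d) => ‖Z + v‖ ^ θ) :=
      (continuous_const.add continuous_id).norm.rpow_const (fun v => Or.inr (by norm_num))
    refine (integrable_const ((N + K) ^ θ)).mono' (hcont.comp_aestronglyMeasurable hD) ?_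
    filter_upwards [hDK] with ω hω
    rw [Real.norm_eq_abs, abs_of_nonneg (Real.rpow_nonneg (norm_nonneg _) _)]
    exact Real.rpow_le_rpow (norm_nonneg _) (le_trans (norm_add_le _ _) (by linarith)) (by norm_num)
  -- coefficients
  set c1 : ℝ := 1/5 * N ^ θ / N with hc1
  set c2 : ℝ := 1/10 * N ^ θ / N^2 with hc2
  set c3 : ℝ := -(1/6) * N ^ θ / N^2 with hc3
  set c4 : ℝ := 16 * N ^ θ / N^3 with hc4
  -- the pointwise a.e. inequality
  have hpt : ∀ᵐ ω ∂μ, ‖Z + D ω‖ ^ θ ≤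
      N ^ θ + (c1 * s ω + (c2 * ‖D ω‖^2 + (c3 * s ω^2 + c4 * ‖D ω‖^3))) := by
    filter_upwards [hDK] with ω hω
    have hr0 : (0:ℝ) ≤ ‖D ω‖ := norm_nonneg _
    have hrN : ‖D ω‖ < N/2 := lt_of_le_of_lt hω hK
    set r : ℝ := ‖D ω‖ with hrdef
    set A : ℝ := ‖Z + D ω‖ with hA
    have hub : A ≤ N + r := norm_add_le _ _
    have hlb : N - r ≤ A := by
      have h := norm_add_le (Z + D ω) (-(D ω))
      rw [add_neg_cancel_right, norm_neg] at h
      linarith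
    have hApos : (0:ℝ) < A := by linarith
    have hxeq : A^2 = N^2 + 2*N*(s ω) + r^2 := by
      have h1 : (inner ℝ Z (D ω) : ℝ) = N * s ω := by
        rw [hs_def]
        simp only [hu_def, real_inner_smul_right, real_inner_comm]
        field_simp
      rw [hA, norm_add_sq_real, h1]
      ring
    set x : ℝ := A^2 / N^2 with hx
    have hN2pos : (0:ℝ) < N^2 := by positivity
    have hx1 : 1/4 ≤ x := by
      rw [hx, le_div_iff₀ hN2pos]
      have h5 : N/2 ≤ A := by linarith
      calc (1:ℝ)/4 * N^2 = (N/2)^2 := by ring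
        _ ≤ A^2 := pow_le_pow_left₀ (by linarith) h5 2
    have hx2 : x ≤ 9/4 := by
      rw [hx, div_le_iff₀ hN2pos]
      have h5 : A ≤ 3/2*N := by linarith
      calc A^2 ≤ (3/2*N)^2 := pow_le_pow_left₀ hApos.le h5 2
        _ = 9/4 * N^2 := by ring
    have hkey := rpow_taylor_tenth x hx1 hx2
    -- rewrite LHS
    have hNx : A ^ θ = N ^ θ * x ^ (1/10 : ℝ) := by
      have hA2 : (A^2) ^ (1/10:ℝ) = A ^ θ := by
        rw [← Real.rpow_natCast A 2, ← Real.rpow_mul hApos.le]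
        norm_num [hθ_def]
      have hN2' : (N^2) ^ (1/10:ℝ) = N ^ θ := by
        rw [← Real.rpow_natCast N 2, ← Real.rpow_mul hN.le]
        norm_num [hθ_def]
      rw [hx, Real.div_rpow (sq_nonneg _) (sq_nonneg _), hA2, hN2']
      rw [mul_comm, div_mul_cancel₀ _ hθpos.ne']
    -- main estimate on x^(1/10)
    set p : ℝ := s ω / N with hp
    set q : ℝ := r / N with hq
    have hq0 : (0:ℝ) ≤ q := by positivity
    have hq2 : q ≤ 1/2 := by
      rw [hq, div_le_iff₀ hN]
      linarith
    have hpq : |p| ≤ q := by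
      rw [hp, hq, abs_div, abs_of_pos hN]
      gcongr
      exact hsb ω
    have hx_sub : x - 1 = 2*p + q^2 := by
      rw [hx, hp, hq, hxeq]
      field_simp
      ring
    have hmain : x ^ (1/10 : ℝ) ≤ 1 + (1/5)*p + (1/10)*q^2 - (1/6)*p^2 + 16*q^3 := by
      refine hkey.trans ?_
      rw [hx_sub]
      have hpl : -q ≤ p := neg_le_of_abs_le hpq
      have hpu : p ≤ q := le_of_abs_le hpq
      exact quad_est p q hq0 hq2 hpl hpu
    rw [hNx]
    calc N ^ θ * x ^ (1/10:ℝ)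
        ≤ N ^ θ * (1 + (1/5)*p + (1/10)*q^2 - (1/6)*p^2 + 16*q^3) :=
          mul_le_mul_of_nonneg_left hmain hθpos.le
      _ = N ^ θ + (c1 * s ω + (c2 * r^2 + (c3 * s ω^2 + c4 * r^3))) := by
          rw [hc1, hc2, hc3, hc4, hp, hq]
          field_simp
          ring
  -- integrate
  have i1 : Integrable (fun ω => c1 * s ω) μ := hs_int.const_mul _
  have i2 : Integrable (fun ω => c2 * ‖D ω‖^2) μ := hr2_int.const_mul _
  have i3 : Integrable (fun ω => c3 * s ω^2) μ := hs2_int.const_mul _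
  have i4 : Integrable (fun ω => c4 * ‖D ω‖^3) μ := hr3_int.const_mul _
  have i34 : Integrable (fun ω => c3 * s ω^2 + c4 * ‖D ω‖^3) μ := i3.add i4
  have i234 : Integrable (fun ω => c2 * ‖D ω‖^2 + (c3 * s ω^2 + c4 * ‖D ω‖^3)) μ := i2.add i34
  have i1234 : Integrable
      (fun ω => c1 * s ω + (c2 * ‖D ω‖^2 + (c3 * s ω^2 + c4 * ‖D ω‖^3))) μ := i1.add i234
  have hg_int : Integrable (fun ω =>
      N ^ θ + (c1 * s ω + (c2 * ‖D ω‖^2 + (c3 * s ω^2 + c4 * ‖D ω‖^3)))) μ :=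
    (integrable_const _).add i1234
  have hint := integral_mono_ae hf0_int hg_int hpt
  have hsplit : ∫ ω, (N ^ θ + (c1 * s ω + (c2 * ‖D ω‖^2 + (c3 * s ω^2 + c4 * ‖D ω‖^3)))) ∂μ
      = N ^ θ + (c1 * ∫ ω, s ω ∂μ + (c2 * ∫ ω, ‖D ω‖^2 ∂μ +
          (c3 * ∫ ω, s ω^2 ∂μ + c4 * ∫ ω, ‖D ω‖^3 ∂μ))) := by
    rw [integral_add (integrable_const _) i1234, integral_add i1 i234,
      integral_add i2 i34, integral_add i3 i4,
      integral_const_mul, integral_const_mul, integral_const_mul, integral_const_mul]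
    simp [measure_univ]
  have hs0 : ∫ ω, s ω ∂μ = 0 := by
    have hcomm : (fun ω => s ω) = fun ω => (inner ℝ u (D ω) : ℝ) :=
      funext fun ω => real_inner_comm _ _
    rw [hs_def] at hcomm ⊢
    rw [hcomm, integral_inner hDint, hmean, inner_zero_right]
  rw [hsplit, hs0] at hint
  -- final arithmetic
  set IA : ℝ := ∫ ω, ‖D ω‖^2 ∂μ with hIA
  set IB : ℝ := ∫ ω, s ω^2 ∂μ with hIB
  set IC : ℝ := ∫ ω, ‖D ω‖^3 ∂μ with hIC
  have hBA : (3/4) * IA ≤ IB := halign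
  have e2 : N ^ (θ - 2 : ℝ) = N ^ θ / N^2 := by
    rw [Real.rpow_sub hN]
    congr 1
    rw [show ((2:ℝ)) = ((2:ℕ):ℝ) by norm_num, Real.rpow_natCast]
  have e3 : N ^ (θ - 3 : ℝ) = N ^ θ / N^3 := by
    rw [Real.rpow_sub hN]
    congr 1
    rw [show ((3:ℝ)) = ((3:ℕ):ℝ) by norm_num, Real.rpow_natCast]
  refine le_trans hint ?_
  rw [e2, e3, hc1, hc2, hc3, hc4]
  have hM : (0:ℝ) < N ^ θ / N^2 := by positivity
  have hIC0 : (0:ℝ) ≤ IC := by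
    rw [hIC]
    exact integral_nonneg fun ω => pow_nonneg (norm_nonneg _) 3
  have hBA' : (N ^ θ / N^2) * (3/4 * IA) ≤ (N ^ θ / N^2) * IB :=
    mul_le_mul_of_nonneg_left hBA hM.le
  ring_nf
  ring_nf at hBA'
  linarith [hBA']
end

section
/- Let β = 1/10, θ₀ ∈ (0, 1/10), and let D be a bounded random vector in R^d with |D| ≤ K almost surely, K < |Z|/2 for a nonzero Z ∈ R^d, and suppose E[D · Ẑ] ≤ −(1 − cos θ₀) ε for some ε ∈ (0, K]. Then E[|Z + D|^{2β}] ≤ |Z|^{2β} − 2β(1 − cos θ₀) ε |Z|^{2β−1} + c(β) |Z|^{2β−2} E[|D|²] for a constant c(β) depending only on β. -/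
open MeasureTheory

/-- Scalar concavity bound: for `0 ≤ p ≤ 1`, `x ^ p ≤ y ^ p + p * y ^ (p-1) * (x - y)`. -/
lemma rpow_concave_bound {x y p : ℝ} (hx : 0 ≤ x) (hy : 0 < y) (hp0 : 0 ≤ p) (hp1 : p ≤ 1) :
    x ^ p ≤ y ^ p + p * y ^ (p - 1) * (x - y) := by
  have hs : (-1 : ℝ) ≤ x / y - 1 := by
    have : 0 ≤ x / y := div_nonneg hx hy.le
    linarith
  have h := rpow_one_add_le_one_add_mul_self hs hp0 hp1
  rw [add_sub_cancel] at h
  have hyp : (0 : ℝ) < y ^ p := Real.rpow_pos_of_pos hy p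
  have h2 : (x / y) ^ p * y ^ p ≤ (1 + p * (x / y - 1)) * y ^ p :=
    mul_le_mul_of_nonneg_right h hyp.le
  have hxy : (x / y) ^ p * y ^ p = x ^ p := by
    rw [Real.div_rpow hx hy.le, div_mul_cancel₀]
    exact hyp.ne'
  rw [hxy] at h2
  calc x ^ p ≤ (1 + p * (x / y - 1)) * y ^ p := h2
    _ = y ^ p + p * (y ^ p / y) * (x - y) := by
        field_simp
    _ = y ^ p + p * y ^ (p - 1) * (x - y) := by
        rw [← Real.rpow_sub_one hy.ne']

/-- One-step drift estimate in the unaligned case of the coupling. -/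
theorem stmt_12 :
    ∃ c : ℝ, 0 < c ∧
      ∀ (β : ℝ), β = 1/10 →
      ∀ (θ₀ : ℝ), 0 < θ₀ → θ₀ < 1/10 →
      ∀ (d : ℕ) (Z : EuclideanSpace ℝ (Fin d)), Z ≠ 0 →
      ∀ (Ω : Type) (mΩ : MeasurableSpace Ω) (μ : Measure Ω), IsProbabilityMeasure μ →
      ∀ (D : Ω → EuclideanSpace ℝ (Fin d)), AEStronglyMeasurable D μ →
      ∀ (K : ℝ), K < ‖Z‖ / 2 →
      (∀ᵐ ω ∂μ, ‖D ω‖ ≤ K) →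
      ∀ (ε : ℝ), 0 < ε → ε ≤ K →
      ((∫ ω, (inner ℝ (D ω) ((1 / ‖Z‖) • Z) : ℝ) ∂μ) ≤ -((1 - Real.cos θ₀) * ε)) →
      (∫ ω, ‖Z + D ω‖ ^ (2 * β) ∂μ)
        ≤ ‖Z‖ ^ (2 * β) - 2 * β * (1 - Real.cos θ₀) * ε * ‖Z‖ ^ (2 * β - 1)
            + c * ‖Z‖ ^ (2 * β - 2) * ∫ ω, ‖D ω‖ ^ 2 ∂μ := by
  refine ⟨1, one_pos, ?_⟩
  intro β hβ θ₀ hθ₀ hθ₀' d Z hZ Ω mΩ μ hμ D hD K hK hDK ε hε hεK hdrift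
  have hZpos : (0 : ℝ) < ‖Z‖ := norm_pos_iff.mpr hZ
  have hKpos : (0 : ℝ) < K := lt_of_lt_of_le hε hεK
  have hβ0 : (0 : ℝ) ≤ β := by rw [hβ]; norm_num
  have hβ1 : β ≤ 1 := by rw [hβ]; norm_num
  -- pointwise bound
  set r := ‖Z‖ with hr
  have hkey : ∀ ω, ‖Z + D ω‖ ^ (2 * β) ≤
      r ^ (2 * β) + 2 * β * r ^ (2 * β - 2) * (inner ℝ Z (D ω) : ℝ)
        + β * r ^ (2 * β - 2) * ‖D ω‖ ^ 2 := by
    intro ω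
    have hx : (0 : ℝ) ≤ ‖Z + D ω‖ ^ 2 := sq_nonneg _
    have hy : (0 : ℝ) < r ^ 2 := by positivity
    have h := rpow_concave_bound hx hy hβ0 hβ1
    have hxy : ‖Z + D ω‖ ^ 2 - r ^ 2 = 2 * (inner ℝ Z (D ω) : ℝ) + ‖D ω‖ ^ 2 := by
      rw [hr, norm_add_sq_real]; ring
    have e1 : ∀ s : ℝ, 0 ≤ s → (s ^ 2) ^ β = s ^ (2 * β) := by
      intro s hs
      rw [← Real.rpow_natCast s 2, ← Real.rpow_mul hs]
      norm_num
    have e2 : (r ^ 2 : ℝ) ^ (β - 1) = r ^ (2 * β - 2) := by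
      rw [← Real.rpow_natCast r 2, ← Real.rpow_mul hZpos.le]
      ring_nf
    rw [hxy, e1 _ hZpos.le, e1 _ (norm_nonneg _), e2] at h
    calc ‖Z + D ω‖ ^ (2 * β)
        ≤ r ^ (2 * β) + β * r ^ (2 * β - 2) * (2 * (inner ℝ Z (D ω) : ℝ) + ‖D ω‖ ^ 2) := h
      _ = r ^ (2 * β) + 2 * β * r ^ (2 * β - 2) * (inner ℝ Z (D ω) : ℝ)
            + β * r ^ (2 * β - 2) * ‖D ω‖ ^ 2 := by ring
  -- integrability
  have hinner : AEStronglyMeasurable (fun ω => (inner ℝ Z (D ω) : ℝ)) μ :=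
    AEStronglyMeasurable.inner aestronglyMeasurable_const hD
  have hint_inner : Integrable (fun ω => (inner ℝ Z (D ω) : ℝ)) μ := by
    refine Integrable.mono' (integrable_const (r * K)) hinner ?_
    filter_upwards [hDK] with ω hω
    calc ‖(inner ℝ Z (D ω) : ℝ)‖ ≤ ‖Z‖ * ‖D ω‖ := norm_inner_le_norm _ _
      _ ≤ r * K := by
          apply mul_le_mul_of_nonneg_left hω hZpos.le
  have hnormsq : AEStronglyMeasurable (fun ω => ‖D ω‖ ^ 2) μ := by
    simpa [pow_two, Pi.mul_def] using hD.norm.mul hD.norm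
  have hint_normsq : Integrable (fun ω => ‖D ω‖ ^ 2) μ := by
    refine Integrable.mono' (integrable_const (K ^ 2)) hnormsq ?_
    filter_upwards [hDK] with ω hω
    rw [Real.norm_eq_abs, abs_of_nonneg (sq_nonneg _)]
    exact pow_le_pow_left₀ (norm_nonneg _) hω 2
  have hg : Integrable (fun ω => r ^ (2 * β) + 2 * β * r ^ (2 * β - 2) * (inner ℝ Z (D ω) : ℝ)
      + β * r ^ (2 * β - 2) * ‖D ω‖ ^ 2) μ :=
    ((integrable_const _).add (hint_inner.const_mul _)).add (hint_normsq.const_mul _)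
  -- integral comparison
  have hmono : (∫ ω, ‖Z + D ω‖ ^ (2 * β) ∂μ) ≤
      ∫ ω, (r ^ (2 * β) + 2 * β * r ^ (2 * β - 2) * (inner ℝ Z (D ω) : ℝ)
        + β * r ^ (2 * β - 2) * ‖D ω‖ ^ 2) ∂μ := by
    refine integral_mono_of_nonneg ?_ hg ?_
    · filter_upwards with ω
      exact Real.rpow_nonneg (norm_nonneg _) _
    · filter_upwards with ω
      exact hkey ω
  have hib : Integrable (fun ω => r ^ (2 * β)
      + 2 * β * r ^ (2 * β - 2) * (inner ℝ Z (D ω) : ℝ)) μ :=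
    (integrable_const _).add (hint_inner.const_mul _)
  rw [integral_add hib (hint_normsq.const_mul _),
    integral_add (integrable_const _) (hint_inner.const_mul _),
    integral_const, integral_const_mul, integral_const_mul, probReal_univ, smul_eq_mul, one_mul] at hmono
  -- drift term
  have hdrift' : (∫ ω, (inner ℝ Z (D ω) : ℝ) ∂μ) ≤ -(r * ((1 - Real.cos θ₀) * ε)) := by
    have heq : ∀ ω, (inner ℝ (D ω) ((1 / r) • Z) : ℝ) = (1 / r) * (inner ℝ Z (D ω) : ℝ) := by
      intro ω
      rw [real_inner_smul_right, real_inner_comm]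
    have := hdrift
    simp_rw [heq] at this
    rw [integral_const_mul] at this
    have h2 : r * ((1 / r) * ∫ ω, (inner ℝ Z (D ω) : ℝ) ∂μ) ≤ r * (-((1 - Real.cos θ₀) * ε)) :=
      mul_le_mul_of_nonneg_left this hZpos.le
    rw [← mul_assoc, mul_one_div_cancel hZpos.ne', one_mul] at h2
    linarith
  have hcos : (0 : ℝ) ≤ 1 - Real.cos θ₀ := by
    have := Real.cos_le_one θ₀
    linarith
  have hr2b2 : (0 : ℝ) ≤ r ^ (2 * β - 2) := Real.rpow_nonneg hZpos.le _
  have hβr : (0 : ℝ) ≤ 2 * β * r ^ (2 * β - 2) := by positivity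
  have hterm : 2 * β * r ^ (2 * β - 2) * (∫ ω, (inner ℝ Z (D ω) : ℝ) ∂μ)
      ≤ - (2 * β * (1 - Real.cos θ₀) * ε * r ^ (2 * β - 1)) := by
    have h3 := mul_le_mul_of_nonneg_left hdrift' hβr
    calc 2 * β * r ^ (2 * β - 2) * (∫ ω, (inner ℝ Z (D ω) : ℝ) ∂μ)
        ≤ 2 * β * r ^ (2 * β - 2) * (-(r * ((1 - Real.cos θ₀) * ε))) := h3
      _ = -(2 * β * (1 - Real.cos θ₀) * ε * (r ^ (2 * β - 2) * r)) := by ring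
      _ = -(2 * β * (1 - Real.cos θ₀) * ε * r ^ (2 * β - 1)) := by
          rw [← Real.rpow_add_one hZpos.ne' (2 * β - 2)]
          ring_nf
  have hsq_int_nonneg : (0 : ℝ) ≤ ∫ ω, ‖D ω‖ ^ 2 ∂μ :=
    integral_nonneg fun ω => sq_nonneg _
  have hlast : β * r ^ (2 * β - 2) * (∫ ω, ‖D ω‖ ^ 2 ∂μ)
      ≤ 1 * r ^ (2 * β - 2) * (∫ ω, ‖D ω‖ ^ 2 ∂μ) := by
    apply mul_le_mul_of_nonneg_right _ hsq_int_nonneg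
    apply mul_le_mul_of_nonneg_right hβ1 hr2b2
  linarith
end

section
/- Let H ≥ 1 and suppose u is a positive function on B_R(0) ⊂ R^d (1 < R < 5) with u(0) = 1 such that for every x ∈ B_R(0) and r > 0 with B_{5r}(x) ⊂ B_R(0), sup_{B_r(x)} u ≤ H inf_{B_r(x)} u. Then sup_{B_1(0)} u ≤ H^{5 log(R/(R−1))}. -/
open Metric

/-- Chaining a scale-ratio-5 Harnack inequality inside `B_R(0)` (`1 < R < 5`)
yields `sup_{B_1} u ≤ H^{5 log(R/(R-1))}`. -/
theorem stmt_14 (d : ℕ) (R : ℝ) (hR1 : 1 < R) (hR5 : R < 5)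
    (u : EuclideanSpace ℝ (Fin d) → ℝ)
    (hu_pos : ∀ x ∈ ball (0 : EuclideanSpace ℝ (Fin d)) R, 0 < u x)
    (hu0 : u 0 = 1)
    (H : ℝ) (hH : 1 ≤ H)
    (hHarnack : ∀ x ∈ ball (0 : EuclideanSpace ℝ (Fin d)) R, ∀ r : ℝ, 0 < r →
      closedBall x (5 * r) ⊆ ball 0 R →
      ∀ y ∈ ball x r, ∀ y' ∈ ball x r, u y ≤ H * u y') :
    ∀ y ∈ ball (0 : EuclideanSpace ℝ (Fin d)) 1,
      u y ≤ H ^ (5 * Real.log (R / (R - 1))) := by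
  intro y hy
  rw [mem_ball_zero_iff] at hy
  have hR0 : (0:ℝ) < R := by linarith
  have hH0 : (0:ℝ) < H := by linarith
  -- one-step Harnack between two colinear-ish points
  have step : ∀ p q : EuclideanSpace ℝ (Fin d), ‖q‖ ≤ ‖p‖ →
      ‖p‖ + ‖q‖ + 5 * ‖p - q‖ < 2 * R → u p ≤ H * u q := by
    intro p q hqp hS
    have ht0 : 0 ≤ ‖p - q‖ := norm_nonneg _
    have hpq : ‖p‖ - ‖q‖ ≤ ‖p - q‖ := by
      have := norm_sub_norm_le p q
      linarith [abs_le.mp (abs_norm_sub_norm_le p q)]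
    have hpR : ‖p‖ < R := by linarith
    have hqR : ‖q‖ < R := lt_of_le_of_lt hqp hpR
    rcases eq_or_lt_of_le ht0 with h0 | ht
    · have hpq' : p = q := by
        rw [← sub_eq_zero, ← norm_eq_zero]; exact h0.symm
      subst hpq'
      have hup : 0 < u p := hu_pos p (mem_ball_zero_iff.mpr hpR)
      nlinarith
    · set t : ℝ := ‖p - q‖ with htdef
      set ε : ℝ := (2 * R - (‖p‖ + ‖q‖ + 5 * t)) / 20 with hεdef
      have hε : 0 < ε := by rw [hεdef]; linarith
      set r : ℝ := t / 2 + ε with hrdef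
      have hr : 0 < r := by rw [hrdef]; linarith
      set m := midpoint ℝ p q with hmdef
      have hmnorm : ‖m‖ ≤ (‖p‖ + ‖q‖) / 2 := by
        rw [hmdef, midpoint_eq_smul_add, invOf_eq_inv, norm_smul]
        have := norm_add_le p q
        rw [norm_inv, Real.norm_ofNat]
        nlinarith [norm_nonneg (p + q)]
      have hmball : m ∈ ball (0 : EuclideanSpace ℝ (Fin d)) R :=
        mem_ball_zero_iff.mpr (by linarith)
      have hdist : dist p q = t := by rw [htdef, dist_eq_norm]
      have hpm : p ∈ ball m r := by
        rw [mem_ball, dist_comm, dist_midpoint_left]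
        rw [Real.norm_ofNat, hdist, hrdef]
        linarith
      have hqm : q ∈ ball m r := by
        rw [mem_ball, dist_comm, dist_midpoint_right]
        rw [Real.norm_ofNat, hdist, hrdef]
        linarith
      have hsub : closedBall m (5 * r) ⊆ ball (0 : EuclideanSpace ℝ (Fin d)) R := by
        intro z hz
        rw [mem_closedBall] at hz
        rw [mem_ball]
        have h1 : dist z 0 ≤ dist z m + dist m 0 := dist_triangle _ _ _
        have h2 : dist m 0 = ‖m‖ := by simp
        rw [hrdef] at hz
        rw [hεdef] at hz
        linarith
      exact hHarnack m hmball r hr hsub p hpm q hqm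
  -- the chaining lemma
  have chain : ∀ n : ℕ, ∀ z : EuclideanSpace ℝ (Fin d), ‖z‖ < R →
      (7/5 : ℝ) ^ n * (R - ‖z‖) > 2 * R / 3 → u z ≤ H ^ (n + 1) := by
    intro n
    induction n with
    | zero =>
      intro z hz hgt
      rw [pow_zero, one_mul] at hgt
      have h6 : ‖z‖ + ‖(0 : EuclideanSpace ℝ (Fin d))‖ + 5 * ‖z - 0‖ < 2 * R := by
        simp only [norm_zero, sub_zero, add_zero]
        linarith
      have := step z 0 (by simp) h6
      rw [hu0] at this
      simpa using this
    | succ n ih =>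
      intro z hz hgt
      by_cases hcase : 2 * R / 3 < R - ‖z‖
      · -- direct jump to 0
        have h6 : ‖z‖ + ‖(0 : EuclideanSpace ℝ (Fin d))‖ + 5 * ‖z - 0‖ < 2 * R := by
          simp only [norm_zero, sub_zero, add_zero]
          linarith
        have h1 := step z 0 (by simp) h6
        rw [hu0, mul_one] at h1
        calc u z ≤ H := h1
          _ = H ^ 1 := (pow_one H).symm
          _ ≤ H ^ (n + 1 + 1) := pow_le_pow_right₀ hH (by omega)
      · push_neg at hcase
        set δ : ℝ := R - ‖z‖ with hδdef
        have hδ0 : 0 < δ := by rw [hδdef]; linarith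
        have hzR3 : R / 3 ≤ ‖z‖ := by rw [hδdef] at hcase; linarith
        have hz0 : 0 < ‖z‖ := by linarith
        set c : ℝ := 1 - 2 * δ / (5 * ‖z‖) with hcdef
        have hc1 : c < 1 := by
          rw [hcdef]
          have : 0 < 2 * δ / (5 * ‖z‖) := by positivity
          linarith
        have hc0 : 0 ≤ c := by
          rw [hcdef]
          rw [sub_nonneg, div_le_one (by positivity)]
          linarith
        set q : EuclideanSpace ℝ (Fin d) := c • z with hqdef
        have hqnorm : ‖q‖ = c * ‖z‖ := by
          rw [hqdef, norm_smul, Real.norm_eq_abs, abs_of_nonneg hc0]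
        have hcz : c * ‖z‖ = ‖z‖ - 2 * δ / 5 := by
          rw [hcdef]; field_simp
        have hzq : ‖z - q‖ = 2 * δ / 5 := by
          have : z - q = (1 - c) • z := by
            rw [hqdef, hcdef]; module
          rw [this, norm_smul, Real.norm_eq_abs, abs_of_nonneg (by linarith)]
          rw [hcdef]; field_simp; ring
        have hq1 : u z ≤ H * u q := by
          apply step z q
          · rw [hqnorm, hcz]; linarith
          · rw [hqnorm, hcz, hzq]; rw [hδdef]; ring_nf; linarith
        have hqR : ‖q‖ < R := by rw [hqnorm, hcz]; linarith
        have hq2 : u q ≤ H ^ (n + 1) := by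
          apply ih q hqR
          have h7 : R - ‖q‖ = 7 / 5 * δ := by
            rw [hqnorm, hcz, hδdef]; ring
          rw [h7]
          have : (7/5 : ℝ) ^ n * (7 / 5 * δ) = (7/5 : ℝ) ^ (n + 1) * δ := by ring
          rw [this]
          exact hgt
        calc u z ≤ H * u q := hq1
          _ ≤ H * H ^ (n + 1) := by
              exact mul_le_mul_of_nonneg_left hq2 (le_of_lt hH0)
          _ = H ^ (n + 1 + 1) := by ring
  -- convert a ℕ-power bound to the rpow bound
  set L : ℝ := Real.log (R / (R - 1)) with hLdef
  have final : ∀ n : ℕ, ((n : ℝ) + 1) ≤ 5 * L →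
      (7/5 : ℝ) ^ n * (R - ‖y‖) > 2 * R / 3 → u y ≤ H ^ (5 * L) := by
    intro n hn hgt
    have h1 : u y ≤ H ^ (n + 1) := chain n y (by linarith) hgt
    calc u y ≤ H ^ (n + 1) := h1
      _ = H ^ (((n + 1 : ℕ) : ℝ)) := (Real.rpow_natCast H (n + 1)).symm
      _ ≤ H ^ (5 * L) := by
          apply Real.rpow_le_rpow_of_exponent_le hH
          push_cast
          linarith
  -- lower bound for log: log x ≥ 1 - 1/x
  have hlog : ∀ x : ℝ, 0 < x → 1 - 1/x ≤ Real.log x := by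
    intro x hx
    have h := Real.log_le_sub_one_of_pos (show (0:ℝ) < x⁻¹ by positivity)
    rw [Real.log_inv] at h
    have : (1:ℝ)/x = x⁻¹ := one_div x
    linarith
  have hR1' : (0:ℝ) < R - 1 := by linarith
  have hLR : 1/R ≤ L := by
    have h := hlog (R / (R - 1)) (by positivity)
    have : 1 - 1 / (R / (R - 1)) = 1/R := by field_simp; ring
    rw [hLdef]; linarith [this ▸ h]
  by_cases hR3 : 3 ≤ R
  · -- one step suffices
    apply final 0
    · have : 1/5 ≤ 1/R := by
        apply div_le_div_of_nonneg_left (by norm_num) hR0 (le_of_lt hR5)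
      push_cast
      linarith
    · rw [pow_zero, one_mul]
      have : ‖y‖ < 1 := hy
      nlinarith
  · push_neg at hR3
    -- multi-step case; R < 3
    have hmlog : (2/5 : ℝ) ≤ Real.log (3/2) := by
      rw [Real.le_log_iff_exp_le (by norm_num)]
      have h5 : Real.exp (2/5) ^ 5 = Real.exp 2 := by
        rw [← Real.exp_nat_mul]; norm_num
      have he2 : Real.exp 2 ≤ 243/32 := by
        have h1 : Real.exp 1 < 2.7182818286 := Real.exp_one_lt_d9
        have h2 : Real.exp 2 = Real.exp 1 * Real.exp 1 := by
          rw [← Real.exp_add]; norm_num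
        nlinarith [Real.exp_pos 1]
      apply le_of_pow_le_pow_left₀ (n := 5) (by norm_num) (by norm_num : (0:ℝ) ≤ 3/2)
      rw [h5]
      norm_num
      linarith
    set lam : ℝ := Real.log (7/5) with hlamdef
    have hlam : (2/7 : ℝ) ≤ lam := by
      have := hlog (7/5) (by norm_num)
      rw [hlamdef]; norm_num at this ⊢; linarith
    have hlam0 : 0 < lam := by linarith
    have hLm : Real.log (3/2) ≤ L := by
      rw [hLdef]
      apply Real.log_le_log (by norm_num)
      rw [le_div_iff₀ hR1']
      linarith
    set A : ℝ := (2 * R / 3) / (R - 1) with hAdef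
    have hA1 : 1 < A := by
      rw [hAdef, lt_div_iff₀ hR1']
      linarith
    have hlogA : Real.log A = L - Real.log (3/2) := by
      have hArw : A = (R / (R - 1)) * (3/2)⁻¹ := by
        rw [hAdef]; field_simp
      rw [hArw, Real.log_mul (by positivity) (by norm_num), Real.log_inv, hLdef]
      ring
    have hlogA0 : 0 ≤ Real.log A := Real.log_nonneg (le_of_lt hA1)
    set n : ℕ := ⌈Real.log A / lam⌉₊ with hndef
    apply final n
    · -- budget: n + 1 ≤ 5 L
      have hceil : (n : ℝ) < Real.log A / lam + 1 := by
        rw [hndef]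
        exact Nat.ceil_lt_add_one (by positivity)
      have hkey : Real.log A / lam + 2 ≤ 5 * L := by
        rw [div_add' _ _ _ (ne_of_gt hlam0), div_le_iff₀ hlam0, hlogA]
        set m : ℝ := Real.log (3/2)
        nlinarith [mul_nonneg (sub_nonneg.mpr hLm) (by linarith : (0:ℝ) ≤ 5 * lam - 1)]
      linarith
    · -- reach: (7/5)^n * (R - ‖y‖) > 2R/3
      have h75 : ((7:ℝ)/5) ^ n = Real.exp ((n : ℝ) * lam) := by
        rw [Real.exp_nat_mul, hlamdef, Real.exp_log (by norm_num)]
      have hnlam : Real.log A ≤ (n : ℝ) * lam := by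
        have := Nat.le_ceil (Real.log A / lam)
        rw [← hndef] at this
        calc Real.log A = Real.log A / lam * lam := by field_simp
          _ ≤ (n : ℝ) * lam := by
              apply mul_le_mul_of_nonneg_right this (le_of_lt hlam0)
      have hexpA : A ≤ ((7:ℝ)/5) ^ n := by
        rw [h75, ← Real.exp_log (by positivity : (0:ℝ) < A)]
        exact Real.exp_le_exp.mpr hnlam
      have hA2 : 2 * R / 3 ≤ ((7:ℝ)/5) ^ n * (R - 1) := by
        rw [hAdef] at hexpA
        rw [div_le_iff₀ hR1'] at hexpA
        linarith
      have hpow : (0:ℝ) < ((7:ℝ)/5) ^ n := by positivity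
      have hy1 : R - 1 < R - ‖y‖ := by
        have : ‖y‖ < 1 := hy
        linarith
      calc 2 * R / 3 ≤ ((7:ℝ)/5) ^ n * (R - 1) := hA2
        _ < ((7:ℝ)/5) ^ n * (R - ‖y‖) := by
            exact mul_lt_mul_of_pos_left hy1 hpow
end
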